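/- Let G=(N,Σ,P,S) be a context-free grammar, possibly with ε-rules, and let w∈L(G). Then a parse tree for w obtained from a shortest derivation of w has height at most max{2|w|·|N|, |N|}. -/

import Mathlib

namespace Ocfg

/-- A symbol: nonterminal or terminal. -/
inductive Sym (N T : Type) : Type
  | nt : N → Sym N T
  | tm : T → Sym N T

/-- An (ordered) context-free grammar: each nonterminal has an ordered
list of right-hand sides; `start` is the start nonterminal. -/
structure OCFG (N T : Type) : Type where
  prods : N → List (List (Sym N T))
  start : N

/-- Ordered ranked trees used as parse trees: terminal leaves, ε-leaves,
and internal nodes labelled by a nonterminal together with the index of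
the rule applied there. -/
inductive PTree (N T : Type) : Type
  | leaf : T → PTree N T
  | eps  : PTree N T
  | node : N → ℕ → List (PTree N T) → PTree N T

mutual
/-- `ParseFrom G A w t`: `t` is a parse tree with root nonterminal `A`
and yield `w`. -/
inductive ParseFrom {N T : Type} (G : OCFG N T) : N → List T → PTree N T → Prop
  | epsNode (A : N) (i : ℕ) :
      (G.prods A)[i]? = some [] →
      ParseFrom G A [] (PTree.node A i [PTree.eps])
  | node (A : N) (i : ℕ) (r : List (Sym N T)) (w : List T) (cs : List (PTree N T)) :
      (G.prods A)[i]? = some r → r ≠ [] → ParseSeq G r w cs →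
      ParseFrom G A w (PTree.node A i cs)

/-- `ParseSeq G r w cs`: the trees `cs` match, in order, the symbols of `r`,
with concatenated yield `w`. -/
inductive ParseSeq {N T : Type} (G : OCFG N T) : List (Sym N T) → List T → List (PTree N T) → Prop
  | nil : ParseSeq G [] [] []
  | consTm (a : T) (r : List (Sym N T)) (w : List T) (cs : List (PTree N T)) :
      ParseSeq G r w cs →
      ParseSeq G (Sym.tm a :: r) (a :: w) (PTree.leaf a :: cs)
  | consNt (A : N) (t : PTree N T) (wA : List T) (r : List (Sym N T)) (w : List T)
      (cs : List (PTree N T)) :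
      ParseFrom G A wA t → ParseSeq G r w cs →
      ParseSeq G (Sym.nt A :: r) (wA ++ w) (t :: cs)
end

/-- The set `P_G(w)` of parse trees of `w`. -/
def parseTrees {N T : Type} (G : OCFG N T) (w : List T) : Set (PTree N T) :=
  {t | ParseFrom G G.start w t}

/-- `n(t)`: the sequence of rule indices of `t`, in pre-order. -/
def PTree.idxSeq {N T : Type} : PTree N T → List ℕ
  | .leaf _ => []
  | .eps => []
  | .node _ i cs => i :: (cs.attach.map (fun c => PTree.idxSeq c.1)).flatten
decreasing_by
  have := List.sizeOf_lt_of_mem c.2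
  simp_wf
  omega

/-- The order `≺_G` on parse trees: lexicographic comparison of the
pre-order rule-index sequences. -/
def treeLT {N T : Type} (t₁ t₂ : PTree N T) : Prop :=
  List.Lex (· < ·) t₁.idxSeq t₂.idxSeq

/-- One-step derivation relation `⇒` of the underlying CFG. -/
def OCFG.Step {N T : Type} (G : OCFG N T) (u v : List (Sym N T)) : Prop :=
  ∃ (u₁ u₂ : List (Sym N T)) (A : N) (r : List (Sym N T)),
    r ∈ G.prods A ∧ u = u₁ ++ Sym.nt A :: u₂ ∧ v = u₁ ++ r ++ u₂

/-- `⇒*`. -/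
def OCFG.Derives {N T : Type} (G : OCFG N T) : List (Sym N T) → List (Sym N T) → Prop :=
  Relation.ReflTransGen G.Step

/-- A nonterminal is useful if it occurs in some sentential form derivable from
the start symbol and derives some terminal string. -/
def Useful {N T : Type} (G : OCFG N T) (A : N) : Prop :=
  (∃ u₁ u₂ : List (Sym N T), G.Derives [Sym.nt G.start] (u₁ ++ Sym.nt A :: u₂)) ∧
  (∃ w : List T, G.Derives [Sym.nt A] (w.map Sym.tm))

/-- `G` is cyclic if `A ⇒⁺ A` for some nonterminal `A`. -/
def Cyclic {N T : Type} (G : OCFG N T) : Prop :=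
  ∃ A : N, Relation.TransGen G.Step [Sym.nt A] [Sym.nt A]

/-- `G` has no ε-rules. -/
def NoEpsRules {N T : Type} (G : OCFG N T) : Prop :=
  ∀ (A : N) (r : List (Sym N T)), r ∈ G.prods A → r ≠ []

/-- A unit-rule step: `A → B` is a rule of `G`. -/
def UnitStep {N T : Type} (G : OCFG N T) (A B : N) : Prop :=
  [Sym.nt B] ∈ G.prods A

/-- `G` has a cycle of unit rules. -/
def HasUnitCycle {N T : Type} (G : OCFG N T) : Prop :=
  ∃ A : N, Relation.TransGen (UnitStep G) A A

/-- `G` is well-ordered: for every string `w`, every nonempty subset of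
`P_G(w)` has a `≺_G`-least element. -/
def WellOrderedG {N T : Type} (G : OCFG N T) : Prop :=
  ∀ (w : List T) (Φ : Set (PTree N T)), Φ ⊆ parseTrees G w → Φ.Nonempty →
    ∃ t ∈ Φ, ∀ t' ∈ Φ, t = t' ∨ treeLT t t'

/-- `t` is the `≺_G`-least parse tree of `w`. -/
def IsLeastTree {N T : Type} (G : OCFG N T) (w : List T) (t : PTree N T) : Prop :=
  ParseFrom G G.start w t ∧ ∀ t', ParseFrom G G.start w t' → t = t' ∨ treeLT t t'

/-- `G` has least parse trees. -/
def HasLeastTrees {N T : Type} (G : OCFG N T) : Prop :=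
  ∀ w : List T, (parseTrees G w).Nonempty → ∃ t, IsLeastTree G w t

/-- Derivations of a given length (number of steps). -/
inductive DerivesIn {N T : Type} (G : OCFG N T) : List (Sym N T) → List (Sym N T) → ℕ → Prop
  | refl (u : List (Sym N T)) : DerivesIn G u u 0
  | step (u v w : List (Sym N T)) (n : ℕ) :
      G.Step u v → DerivesIn G v w n → DerivesIn G u w (n + 1)

/-- Number of rule applications in a parse tree (= length of the
corresponding leftmost derivation). -/
def PTree.numRules {N T : Type} : PTree N T → ℕ
  | .leaf _ => 0
  | .eps => 0
  | .node _ _ cs => 1 + ((cs.attach.map (fun c => PTree.numRules c.1)).foldr (· + ·) 0)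
decreasing_by
  have := List.sizeOf_lt_of_mem c.2
  simp_wf
  omega

/-- Height of a tree: a single leaf has height 0. -/
def PTree.height {N T : Type} : PTree N T → ℕ
  | .leaf _ => 0
  | .eps => 0
  | .node _ _ cs => 1 + ((cs.attach.map (fun c => PTree.height c.1)).foldr max 0)
decreasing_by
  have := List.sizeOf_lt_of_mem c.2
  simp_wf
  omega

/-- The language of `G`. -/
def langOf {N T : Type} (G : OCFG N T) : Language T :=
  {w | ∃ t, ParseFrom G G.start w t}

end Ocfg

open Ocfg

namespace Ocfg

/-- Sum of numRules over a list of trees. -/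
def sumR {N T : Type} (cs : List (PTree N T)) : ℕ :=
  (cs.map PTree.numRules).foldr (· + ·) 0

lemma sumR_nil {N T : Type} : sumR ([] : List (PTree N T)) = 0 := rfl

lemma sumR_cons {N T : Type} (c : PTree N T) (cs : List (PTree N T)) :
    sumR (c :: cs) = c.numRules + sumR cs := rfl

lemma numRules_node {N T : Type} (A : N) (i : ℕ) (cs : List (PTree N T)) :
    (PTree.node A i cs).numRules = 1 + sumR cs := by
  rw [PTree.numRules, sumR]
  congr 1
  rw [List.attach_map_val]

lemma numRules_leaf {N T : Type} (a : T) : (PTree.leaf a : PTree N T).numRules = 0 := by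
  rw [PTree.numRules]

lemma height_node {N T : Type} (A : N) (i : ℕ) (cs : List (PTree N T)) :
    (PTree.node A i cs).height = 1 + (cs.map PTree.height).foldr max 0 := by
  rw [PTree.height]
  congr 1
  rw [List.attach_map_val]

lemma height_leaf {N T : Type} (a : T) : (PTree.leaf a : PTree N T).height = 0 := by
  rw [PTree.height]

lemma height_eps {N T : Type} : (PTree.eps : PTree N T).height = 0 := by
  rw [PTree.height]

lemma mem_le_sumR {N T : Type} {c : PTree N T} {cs : List (PTree N T)} (hc : c ∈ cs) :
    c.numRules ≤ sumR cs := by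
  induction cs with
  | nil => simp at hc
  | cons d ds ih =>
    rw [sumR_cons]
    rcases List.mem_cons.mp hc with rfl | h
    · omega
    · have := ih h; omega

lemma foldr_max_le {l : List ℕ} {K : ℕ} (h : ∀ x ∈ l, x ≤ K) :
    l.foldr max 0 ≤ K := by
  induction l with
  | nil => simp
  | cons a l ih =>
    simp only [List.foldr_cons]
    have h1 := h a (List.mem_cons_self (a := a) (l := l))
    have h2 := ih (fun x hx => h x (List.mem_cons_of_mem a hx))
    omega

/-- Children of a sum-minimal parse sequence are themselves minimal parses
of their (factor) yields. -/
lemma extract {N T : Type} (G : OCFG N T) :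
    ∀ (r : List (Sym N T)) (v : List T) (cs : List (PTree N T)),
      ParseSeq G r v cs →
      (∀ cs', ParseSeq G r v cs' → sumR cs ≤ sumR cs') →
      ∀ c ∈ cs, (∃ a, c = PTree.leaf a) ∨
        ∃ B u x y, v = x ++ u ++ y ∧ ParseFrom G B u c ∧
          ∀ s, ParseFrom G B u s → c.numRules ≤ s.numRules := by
  intro r
  induction r with
  | nil =>
    intro v cs h _ c hc
    cases h
    simp at hc
  | cons sy r ih =>
    intro v cs h hmin c hc
    cases h with
    | consTm a r w cs0 h0 =>
      rcases List.mem_cons.mp hc with rfl | hc0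
      · exact Or.inl ⟨a, rfl⟩
      · have hmin0 : ∀ cs', ParseSeq G r w cs' → sumR cs0 ≤ sumR cs' := by
          intro cs' h'
          have := hmin (PTree.leaf a :: cs') (ParseSeq.consTm a r w cs' h')
          rw [sumR_cons, sumR_cons] at this
          omega
        rcases ih w cs0 h0 hmin0 c hc0 with h | ⟨B, u, x, y, hv, hB, hm⟩
        · exact Or.inl h
        · exact Or.inr ⟨B, u, a :: x, y, by simp [hv], hB, hm⟩
    | consNt A t wA r w cs0 hA h0 =>
      rcases List.mem_cons.mp hc with rfl | hc0
      · refine Or.inr ⟨A, wA, [], w, by simp, hA, fun s hs => ?_⟩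
        have := hmin (s :: cs0) (ParseSeq.consNt A s wA r w cs0 hs h0)
        rw [sumR_cons, sumR_cons] at this
        omega
      · have hmin0 : ∀ cs', ParseSeq G r w cs' → sumR cs0 ≤ sumR cs' := by
          intro cs' h'
          have := hmin (t :: cs') (ParseSeq.consNt A t wA r w cs' hA h')
          rw [sumR_cons, sumR_cons] at this
          omega
        rcases ih w cs0 h0 hmin0 c hc0 with h | ⟨B, u, x, y, hv, hB, hm⟩
        · exact Or.inl h
        · exact Or.inr ⟨B, u, wA ++ x, y, by simp [hv], hB, hm⟩

/-- Main bound: a minimal parse tree of `v` from `A`, strictly smaller than every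
parse of `v` from any banned nonterminal in `F`, has height at most
`(if v = [] then 1 else 2|v|) * |N| - |F|`. -/
lemma main_bound {N T : Type} [Fintype N] (G : OCFG N T) :
    ∀ (n : ℕ) (t : PTree N T), t.numRules ≤ n → ∀ (A : N) (v : List T) (F : Finset N),
      ParseFrom G A v t →
      (∀ s, ParseFrom G A v s → t.numRules ≤ s.numRules) →
      (∀ B ∈ F, ∀ s, ParseFrom G B v s → t.numRules < s.numRules) →
      t.height + F.card ≤ (if v.length = 0 then 1 else 2 * v.length) * Fintype.card N := by
  classical
  intro n
  induction n with
  | zero =>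
    intro t hle A v F ht _ _
    cases ht <;> rw [numRules_node] at hle <;> omega
  | succ n IH =>
    intro t hle A v F ht hmin hF
    cases ht with
    | epsNode _ i hrule =>
      have ht' : ParseFrom G A [] (PTree.node A i [PTree.eps]) := ParseFrom.epsNode A i hrule
      have hAF : A ∉ F := fun hA => absurd (hF A hA _ ht') (lt_irrefl _)
      have hcardF : F.card + 1 ≤ Fintype.card N := by
        have h1 := Finset.card_le_univ (insert A F)
        rwa [Finset.card_insert_of_notMem hAF] at h1
      rw [height_node]
      simp only [List.length_nil, List.map_cons, List.map_nil, List.foldr_cons,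
        List.foldr_nil, height_eps, if_pos (rfl : (0:ℕ) = 0), Nat.max_self, one_mul, eq_self_iff_true, if_true]
      omega
    | node _ i r _ cs hrule hrne hseq =>
      have ht' : ParseFrom G A v (PTree.node A i cs) := ParseFrom.node A i r v cs hrule hrne hseq
      have hAF : A ∉ F := fun hA => absurd (hF A hA _ ht') (lt_irrefl _)
      have hcardF : F.card + 1 ≤ Fintype.card N := by
        have h1 := Finset.card_le_univ (insert A F)
        rwa [Finset.card_insert_of_notMem hAF] at h1
      have hseqmin : ∀ cs', ParseSeq G r v cs' → sumR cs ≤ sumR cs' := by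
        intro cs' h'
        have := hmin _ (ParseFrom.node A i r v cs' hrule hrne h')
        rw [numRules_node, numRules_node] at this
        omega
      set K := (if v.length = 0 then 1 else 2 * v.length) * Fintype.card N with hKdef
      have hKge : F.card + 1 ≤ K := by
        rcases Nat.eq_zero_or_pos v.length with hv | hv
        · simp only [hKdef, if_pos hv, one_mul]; exact hcardF
        · have : 1 * Fintype.card N ≤ 2 * v.length * Fintype.card N :=
            Nat.mul_le_mul_right _ (by omega)
          simp only [hKdef, if_neg (by omega : ¬ v.length = 0)]
          omega
      have hch : ∀ c ∈ cs, c.height ≤ K - (F.card + 1) := by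
        intro c hc
        rcases extract G r v cs hseq hseqmin c hc with ⟨a, rfl⟩ | ⟨B, u, x, y, hv, hB, hminc⟩
        · rw [height_leaf]; omega
        · have hcn : c.numRules ≤ n := by
            have h1 := mem_le_sumR hc
            rw [numRules_node] at hle
            omega
          have hct : c.numRules < (PTree.node A i cs).numRules := by
            rw [numRules_node]
            have := mem_le_sumR hc
            omega
          by_cases huv : u = v
          · subst huv
            have hins : ∀ C ∈ insert A F, ∀ s, ParseFrom G C u s → c.numRules < s.numRules := by
              intro C hC s hs
              rcases Finset.mem_insert.mp hC with rfl | hC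
              · exact lt_of_lt_of_le hct (hmin s hs)
              · exact lt_trans hct (hF C hC s hs)
            have hIH := IH c hcn B u (insert A F) hB hminc hins
            rw [Finset.card_insert_of_notMem hAF] at hIH
            omega
          · have hulen : u.length < v.length := by
              have hlen : v.length = x.length + u.length + y.length := by
                rw [hv]; simp [List.length_append]; omega
              rcases Nat.lt_or_ge u.length v.length with h | h
              · exact h
              · exfalso
                have hx : x.length = 0 := by omega
                have hy : y.length = 0 := by omega
                rw [List.length_eq_zero_iff] at hx hy
                subst hx; subst hy
                simp at hv
                exact huv hv.symm
            have hIH := IH c hcn B u ∅ hB hminc (by simp)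
            rw [Finset.card_empty, add_zero] at hIH
            have harith : (if u.length = 0 then 1 else 2 * u.length) * Fintype.card N
                + Fintype.card N ≤ 2 * v.length * Fintype.card N := by
              have h2 : (if u.length = 0 then 1 else 2 * u.length) + 1 ≤ 2 * v.length := by
                split <;> omega
              calc (if u.length = 0 then 1 else 2 * u.length) * Fintype.card N + Fintype.card N
                  = ((if u.length = 0 then 1 else 2 * u.length) + 1) * Fintype.card N := by ring
                _ ≤ 2 * v.length * Fintype.card N := Nat.mul_le_mul_right _ h2
            have hKeq : K = 2 * v.length * Fintype.card N := by
              simp only [hKdef, if_neg (by omega : ¬ v.length = 0)]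
            omega
      rw [height_node]
      have hmx : (cs.map PTree.height).foldr max 0 ≤ K - (F.card + 1) := by
        apply foldr_max_le
        intro x hx
        rcases List.mem_map.mp hx with ⟨c, hc, rfl⟩
        exact hch c hc
      omega

end Ocfg


/-- In a CFG (possibly with ε-rules), a parse tree of `w`
obtained from a shortest derivation (i.e. one with a minimal number of rule
applications) has height at most `max(2|w|·|N|, |N|)`. -/
theorem stmt10 {N T : Type} [Fintype N] [Fintype T] (G : OCFG N T)
    (w : List T) (t : PTree N T)
    (ht : ParseFrom G G.start w t)
    (hshortest : ∀ t' : PTree N T, ParseFrom G G.start w t' → t.numRules ≤ t'.numRules) :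
    t.height ≤ max (2 * w.length * Fintype.card N) (Fintype.card N) := by
  have hmain := main_bound G t.numRules t le_rfl G.start w ∅ ht hshortest (by simp)
  rw [Finset.card_empty, add_zero] at hmain
  rcases Nat.eq_zero_or_pos w.length with hw | hw
  · rw [if_pos hw, one_mul] at hmain
    exact le_trans hmain (le_max_right _ _)
  · rw [if_neg (by omega : ¬ w.length = 0)] at hmain
    exact le_trans hmain (le_max_left _ _)
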